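/- Let c ∈ ℝ and let Z have the Gaussian distribution N(c,1). Then the law of the two-sided p-value P = 2(1 − Φ(|Z|)) is absolutely continuous on (0,1) with density p(P | c) = (1/2)·exp{ (c/2)·(2·Φ^{−1}(1 − P/2) − c) } + (1/2)·exp{ −(c/2)·(2·Φ^{−1}(1 − P/2) + c) }; that is, the pushforward of N(c,1) under z ↦ 2(1 − Φ(|z|)) equals Lebesgue measure on (0,1) weighted by this density, where Φ^{−1}(1 − P/2) denotes the unique real t with Φ(t) = 1 − P/2. -/

import Mathlib

open MeasureTheory

/-- The standard normal density φ(t) = (1/√(2π))·exp(−t²/2). -/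
noncomputable def stdNormalPDF (t : ℝ) : ℝ :=
  (Real.sqrt (2 * Real.pi))⁻¹ * Real.exp (-t ^ 2 / 2)

/-- The standard normal cumulative distribution function Φ(t) = ∫_{−∞}^t φ(s) ds. -/
noncomputable def stdNormalCDF (t : ℝ) : ℝ :=
  ∫ s in Set.Iic t, stdNormalPDF s

/-- The Gaussian measure N(c,1) on ℝ, with density x ↦ φ(x − c) w.r.t. Lebesgue. -/
noncomputable def gaussianMeasure (c : ℝ) : Measure ℝ :=
  volume.withDensity fun x => ENNReal.ofReal (stdNormalPDF (x - c))

open Set Real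

lemma stdNormalPDF_eq_gaussian : stdNormalPDF = ProbabilityTheory.gaussianPDFReal 0 1 := by
  funext x
  simp [stdNormalPDF, ProbabilityTheory.gaussianPDFReal]

lemma stdNormalPDF_pos (t : ℝ) : 0 < stdNormalPDF t := by
  have : (0:ℝ) < Real.pi := Real.pi_pos
  unfold stdNormalPDF
  positivity

lemma stdNormalPDF_even (t : ℝ) : stdNormalPDF (-t) = stdNormalPDF t := by
  simp [stdNormalPDF]

lemma stdNormalPDF_continuous : Continuous stdNormalPDF := by
  unfold stdNormalPDF; fun_prop

lemma stdNormalPDF_integrable : Integrable stdNormalPDF := by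
  rw [stdNormalPDF_eq_gaussian]
  exact ProbabilityTheory.integrable_gaussianPDFReal 0 1

lemma stdNormalPDF_integral : ∫ x, stdNormalPDF x = 1 := by
  rw [stdNormalPDF_eq_gaussian]
  exact ProbabilityTheory.integral_gaussianPDFReal_eq_one 0 one_ne_zero

lemma stdNormalCDF_hasDerivAt (t : ℝ) :
    HasDerivAt stdNormalCDF (stdNormalPDF t) t := by
  have key : ∀ u : ℝ, stdNormalCDF u = stdNormalCDF 0 + ∫ x in (0:ℝ)..u, stdNormalPDF x := by
    intro u
    have := intervalIntegral.integral_Iic_sub_Iic (μ := volume) (f := stdNormalPDF)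
      (a := (0:ℝ)) (b := u) stdNormalPDF_integrable.integrableOn
      stdNormalPDF_integrable.integrableOn
    unfold stdNormalCDF
    linarith [this]
  have hd : HasDerivAt (fun u => stdNormalCDF 0 + ∫ x in (0:ℝ)..u, stdNormalPDF x)
      (stdNormalPDF t) t := by
    have h1 : HasDerivAt (fun u => ∫ x in (0:ℝ)..u, stdNormalPDF x) (stdNormalPDF t) t :=
      intervalIntegral.integral_hasDerivAt_right
        (stdNormalPDF_integrable.intervalIntegrable)
        (stdNormalPDF_continuous.stronglyMeasurableAtFilter _ _)
        stdNormalPDF_continuous.continuousAt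
    simpa using h1.const_add (stdNormalCDF 0)
  exact hd.congr_of_eventuallyEq (Filter.Eventually.of_forall fun u => key u)

lemma stdNormalCDF_strictMono : StrictMono stdNormalCDF := by
  apply strictMono_of_deriv_pos
  intro x
  rw [(stdNormalCDF_hasDerivAt x).deriv]
  exact stdNormalPDF_pos x

lemma stdNormalCDF_continuous : Continuous stdNormalCDF :=
  continuous_iff_continuousAt.2 fun t => (stdNormalCDF_hasDerivAt t).continuousAt

lemma setIntegral_stdNormalPDF_pos {s : Set ℝ} (hs : MeasurableSet s) (hpos : 0 < volume s) :
    0 < ∫ x in s, stdNormalPDF x := by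
  rw [setIntegral_pos_iff_support_of_nonneg_ae
      (Filter.Eventually.of_forall fun x => (stdNormalPDF_pos x).le)
      stdNormalPDF_integrable.integrableOn]
  have : Function.support stdNormalPDF = Set.univ := by
    ext x; simp [Function.mem_support, (stdNormalPDF_pos x).ne']
  rwa [this, Set.univ_inter]

lemma stdNormalCDF_pos (t : ℝ) : 0 < stdNormalCDF t :=
  setIntegral_stdNormalPDF_pos measurableSet_Iic (by simp)

lemma stdNormalCDF_lt_one (t : ℝ) : stdNormalCDF t < 1 := by
  have h := integral_add_compl (measurableSet_Iic (a := t)) stdNormalPDF_integrable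
  rw [stdNormalPDF_integral, compl_Iic] at h
  have hIoi : 0 < ∫ x in Set.Ioi t, stdNormalPDF x :=
    setIntegral_stdNormalPDF_pos measurableSet_Ioi (by simp)
  unfold stdNormalCDF
  linarith

lemma stdNormalCDF_zero : stdNormalCDF 0 = 1 / 2 := by
  have h := integral_add_compl (measurableSet_Iic (a := (0:ℝ))) stdNormalPDF_integrable
  rw [stdNormalPDF_integral, compl_Iic] at h
  have hsym : (∫ x in Set.Iic (0:ℝ), stdNormalPDF x) = ∫ x in Set.Ioi (0:ℝ), stdNormalPDF x := by
    rw [show Set.Ioi (0:ℝ) = Set.Ioi (-(0:ℝ)) by norm_num, ← integral_comp_neg_Iic]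
    simp [stdNormalPDF_even]
  unfold stdNormalCDF
  linarith

lemma lintegral_image_eq_lintegral_abs_deriv_mul' {s : Set ℝ} {f f' : ℝ → ℝ}
    (hs : MeasurableSet s) (hf' : ∀ x ∈ s, HasDerivWithinAt f (f' x) s x)
    (hf : Set.InjOn f s) (g : ℝ → ENNReal) :
    ∫⁻ x in f '' s, g x = ∫⁻ x in s, ENNReal.ofReal |f' x| * g (f x) := by
  simpa only [ContinuousLinearMap.det_toSpanSingleton] using
    lintegral_image_eq_lintegral_abs_det_fderiv_mul volume hs
      (fun x hx => (hf' x hx).hasFDerivWithinAt) hf g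

/-- Let Z ~ N(c,1). The law of the two-sided p-value P = 2(1 − Φ(|Z|)) is absolutely
continuous on (0,1) with density
p(P | c) = (1/2)·exp{(c/2)(2Φ⁻¹(1 − P/2) − c)} + (1/2)·exp{−(c/2)(2Φ⁻¹(1 − P/2) + c)};
here Φ⁻¹ is any function `Φinv` satisfying Φ(Φinv y) = y for all y ∈ (0,1). -/
theorem stmt_16 (c : ℝ) (Φinv : ℝ → ℝ)
    (hΦinv : ∀ y ∈ Set.Ioo (0 : ℝ) 1, stdNormalCDF (Φinv y) = y) :
    Measure.map (fun z : ℝ => 2 * (1 - stdNormalCDF |z|)) (gaussianMeasure c) =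
      (volume.restrict (Set.Ioo (0 : ℝ) 1)).withDensity fun P =>
        ENNReal.ofReal
          (1 / 2 * Real.exp (c / 2 * (2 * Φinv (1 - P / 2) - c)) +
           1 / 2 * Real.exp (-(c / 2) * (2 * Φinv (1 - P / 2) + c))) := by
  set f : ℝ → ℝ := fun P =>
    1 / 2 * Real.exp (c / 2 * (2 * Φinv (1 - P / 2) - c)) +
      1 / 2 * Real.exp (-(c / 2) * (2 * Φinv (1 - P / 2) + c)) with hf_def
  set q : ℝ → ℝ := fun t => 2 * (1 - stdNormalCDF t) with hq_def
  have hq_cont : Continuous q := continuous_const.mul (continuous_const.sub stdNormalCDF_continuous)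
  have hp_meas : Measurable (fun z : ℝ => 2 * (1 - stdNormalCDF |z|)) :=
    (hq_cont.comp continuous_abs).measurable
  have hΦmem : ∀ t, stdNormalCDF t ∈ Set.Ioo (0:ℝ) 1 :=
    fun t => ⟨stdNormalCDF_pos t, stdNormalCDF_lt_one t⟩
  have hfix : ∀ t : ℝ, Φinv (stdNormalCDF t) = t := fun t =>
    stdNormalCDF_strictMono.injective (hΦinv _ (hΦmem t))
  ext s hs
  rw [Measure.map_apply hp_meas hs, gaussianMeasure, withDensity_apply _ (hp_meas hs),
    withDensity_apply _ hs, Measure.restrict_restrict hs]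
  set A : Set ℝ := Set.Ioi 0 ∩ q ⁻¹' s with hA_def
  have hA_meas : MeasurableSet A := measurableSet_Ioi.inter (hq_cont.measurable hs)
  -- image of A under q
  have himg : q '' A = s ∩ Set.Ioo 0 1 := by
    ext y
    constructor
    · rintro ⟨t, ⟨ht0, hts⟩, rfl⟩
      refine ⟨hts, ?_, ?_⟩
      · have := stdNormalCDF_lt_one t
        simp only [hq_def]
        linarith
      · have : stdNormalCDF 0 < stdNormalCDF t := stdNormalCDF_strictMono ht0
        rw [stdNormalCDF_zero] at this
        simp only [hq_def]
        linarith
    · rintro ⟨hys, hy0, hy1⟩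
      refine ⟨Φinv (1 - y / 2), ⟨?_, ?_⟩, ?_⟩
      · have hΦ : stdNormalCDF (Φinv (1 - y / 2)) = 1 - y / 2 :=
          hΦinv _ ⟨by linarith, by linarith⟩
        refine Set.mem_Ioi.2 ?_
        by_contra h
        push_neg at h
        have := stdNormalCDF_strictMono.le_iff_le.2 h
        rw [hΦ, stdNormalCDF_zero] at this
        linarith
      · show q (Φinv (1 - y / 2)) ∈ s
        have hΦ : stdNormalCDF (Φinv (1 - y / 2)) = 1 - y / 2 :=
          hΦinv _ ⟨by linarith, by linarith⟩
        simp only [hq_def, hΦ]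
        convert hys using 1
        ring
      · have hΦ : stdNormalCDF (Φinv (1 - y / 2)) = 1 - y / 2 :=
          hΦinv _ ⟨by linarith, by linarith⟩
        simp only [hq_def, hΦ]
        ring
  -- derivative of q on A
  have hq_deriv : ∀ t ∈ A, HasDerivWithinAt q (-(2 * stdNormalPDF t)) A t := by
    intro t _
    have : HasDerivAt q (2 * (0 - stdNormalPDF t)) t :=
      ((hasDerivAt_const t (1:ℝ)).sub (stdNormalCDF_hasDerivAt t)).const_mul 2
    simpa [mul_comm] using this.hasDerivWithinAt
  have hq_inj : Set.InjOn q A := by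
    intro a _ b _ hab
    have : stdNormalCDF a = stdNormalCDF b := by
      simp only [hq_def] at hab; linarith
    exact stdNormalCDF_strictMono.injective this
  -- RHS computation
  have hRHS : (∫⁻ P in s ∩ Set.Ioo 0 1, ENNReal.ofReal (f P)) =
      ∫⁻ t in A, (ENNReal.ofReal (stdNormalPDF (t - c)) +
        ENNReal.ofReal (stdNormalPDF (-t - c))) := by
    rw [← himg, lintegral_image_eq_lintegral_abs_deriv_mul' hA_meas hq_deriv hq_inj]
    apply setLIntegral_congr_fun hA_meas
    intro t ht
    beta_reduce
    have habs : |(-(2 * stdNormalPDF t))| = 2 * stdNormalPDF t := by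
      rw [abs_neg, abs_of_pos (by linarith [stdNormalPDF_pos t])]
    have hfq : f (q t) = 1 / 2 * Real.exp (c / 2 * (2 * t - c)) +
        1 / 2 * Real.exp (-(c / 2) * (2 * t + c)) := by
      have : (1 : ℝ) - q t / 2 = stdNormalCDF t := by simp only [hq_def]; ring
      simp only [hf_def, this, hfix]
    rw [habs, hfq, ← ENNReal.ofReal_mul (by have := stdNormalPDF_pos t; positivity)]
    rw [← ENNReal.ofReal_add (stdNormalPDF_pos _).le (stdNormalPDF_pos _).le]
    congr 1
    simp only [stdNormalPDF]
    have h1 : Real.exp (-t ^ 2 / 2) * Real.exp (c / 2 * (2 * t - c))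
        = Real.exp (-(t - c) ^ 2 / 2) := by rw [← Real.exp_add]; congr 1; ring
    have h2 : Real.exp (-t ^ 2 / 2) * Real.exp (-(c / 2) * (2 * t + c))
        = Real.exp (-(-t - c) ^ 2 / 2) := by rw [← Real.exp_add]; congr 1; ring
    linear_combination (Real.sqrt (2 * Real.pi))⁻¹ * h1 + (Real.sqrt (2 * Real.pi))⁻¹ * h2
  -- LHS computation
  have h1 : ((fun z : ℝ => 2 * (1 - stdNormalCDF |z|)) ⁻¹' s) \ (A ∪ Neg.neg '' A) ⊆ {0} := by
    rintro z ⟨hz, hznot⟩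
    rcases lt_trichotomy z 0 with hneg | hzero | hpos
    · exact absurd (Or.inr ⟨-z, ⟨neg_pos.2 hneg, by
        show q (-z) ∈ s
        simpa [hq_def, abs_of_neg hneg] using hz⟩, neg_neg z⟩) hznot
    · simp [hzero]
    · exact absurd (Or.inl ⟨hpos, by
        show q z ∈ s
        simpa [hq_def, abs_of_pos hpos] using hz⟩) hznot
  have h2 : (A ∪ Neg.neg '' A) ⊆ (fun z : ℝ => 2 * (1 - stdNormalCDF |z|)) ⁻¹' s := by
    rintro z (⟨hz0, hzs⟩ | ⟨t, ⟨ht0, hts⟩, rfl⟩)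
    · simpa [hq_def, abs_of_pos (Set.mem_Ioi.1 hz0)] using hzs
    · have : -t < 0 := by linarith [Set.mem_Ioi.1 ht0]
      simpa [hq_def, abs_of_neg this] using hts
  have hsetae : (fun z : ℝ => 2 * (1 - stdNormalCDF |z|)) ⁻¹' s
      =ᵐ[volume] ((A ∪ Neg.neg '' A : Set ℝ)) := by
    refine (MeasureTheory.ae_eq_set.2 ⟨measure_mono_null h1 volume_singleton, ?_⟩)
    rw [Set.diff_eq_empty.2 h2]
    simp
  rw [setLIntegral_congr hsetae]
  have hnegA_eq : Neg.neg '' A = Neg.neg ⁻¹' A := by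
    ext x
    simp only [Set.mem_image, Set.mem_preimage]
    constructor
    · rintro ⟨t, ht, rfl⟩; simpa using ht
    · intro h; exact ⟨-x, h, neg_neg x⟩
  have hnegA_meas : MeasurableSet (Neg.neg '' A) := by
    rw [hnegA_eq]; exact hA_meas.preimage measurable_neg
  have hdisj : Disjoint A (Neg.neg '' A) := by
    refine Set.disjoint_left.2 ?_
    rintro z hzA ⟨t, htA, rfl⟩
    have h1 : (0:ℝ) < -t := Set.mem_Ioi.1 hzA.1
    have h2 : (0:ℝ) < t := Set.mem_Ioi.1 htA.1
    linarith
  rw [lintegral_union hnegA_meas hdisj]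
  have hneg_cv : (∫⁻ z in Neg.neg '' A, ENNReal.ofReal (stdNormalPDF (z - c))) =
      ∫⁻ t in A, ENNReal.ofReal (stdNormalPDF (-t - c)) := by
    rw [lintegral_image_eq_lintegral_abs_deriv_mul' (f := Neg.neg) (f' := fun _ => (-1:ℝ))
      hA_meas (fun x _ => (hasDerivAt_neg x).hasDerivWithinAt) neg_injective.injOn]
    simp
  have hmeas1 : Measurable fun t : ℝ => ENNReal.ofReal (stdNormalPDF (t - c)) :=
    (stdNormalPDF_continuous.comp (continuous_id.sub continuous_const)).measurable.ennreal_ofReal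
  rw [hneg_cv, hRHS, lintegral_add_left hmeas1]
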